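/- For any six matrices A₁, A₂, A₃, B₁, B₂, B₃ in SL(2,ℂ), define s₃(C₁,C₂,C₃) = tr(C₁)·tr(C₃C₂) + tr(C₂)·tr(C₃C₁) + tr(C₃)·tr(C₂C₁) − tr(C₃)·tr(C₂)·tr(C₁) − 2·tr(C₃C₂C₁) and z(C,D) = tr(C·D) − (1/2)·tr(C)·tr(D). Then s₃(A₁,A₂,A₃)·s₃(B₁,B₂,B₃) + 2·det Z = 0, where Z is the 3×3 matrix with entries Z_{pq} = z(A_p, B_q). -/
import Mathlib


open Matrix

/-- `s₃(C₁,C₂,C₃) = tr(C₁)tr(C₃C₂) + tr(C₂)tr(C₃C₁) + tr(C₃)tr(C₂C₁)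
   − tr(C₃)tr(C₂)tr(C₁) − 2 tr(C₃C₂C₁)`. -/
noncomputable def s3 (C1 C2 C3 : Matrix (Fin 2) (Fin 2) ℂ) : ℂ :=
  C1.trace * (C3 * C2).trace + C2.trace * (C3 * C1).trace + C3.trace * (C2 * C1).trace
    - C3.trace * C2.trace * C1.trace - 2 * (C3 * C2 * C1).trace

/-- `z(C,D) = tr(CD) − (1/2) tr(C) tr(D)`. -/
noncomputable def zf (C D : Matrix (Fin 2) (Fin 2) ℂ) : ℂ :=
  (C * D).trace - (1 / 2) * C.trace * D.trace

set_option maxHeartbeats 4000000 in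
/-- Type 1 relation: `s₃(A₁,A₂,A₃)·s₃(B₁,B₂,B₃) + 2·det Z = 0` where
`Z_{pq} = z(A_p, B_q)`. -/
theorem type1_relation (A B : Fin 3 → Matrix (Fin 2) (Fin 2) ℂ)
    (hA : ∀ p, (A p).det = 1) (hB : ∀ q, (B q).det = 1) :
    s3 (A 0) (A 1) (A 2) * s3 (B 0) (B 1) (B 2)
      + 2 * (Matrix.of fun p q : Fin 3 => zf (A p) (B q)).det = 0 := by
  simp only [s3, zf, Matrix.det_fin_three, Matrix.trace_fin_two, Matrix.mul_apply,
    Fin.sum_univ_two, Matrix.of_apply]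
  ring
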